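/- For the system ẋ = y + xR(x,y), ẏ = −x^{2n−1} + n·y·R(x,y), where R is a (1,n)-quasihomogeneous polynomial of weighted degree m+n−2, the function V₀(x,y) = (x^{2n} + n y²)^{(m−1)/(2n) + 1} is an inverse integrating factor on ℝ² \ {(0,0)}. -/

import Mathlib

lemma mvpoly2_differentiable (p : MvPolynomial (Fin 2) ℝ) :
    Differentiable ℝ (fun v : ℝ × ℝ => MvPolynomial.eval ![v.1, v.2] p) := by
  induction p using MvPolynomial.induction_on with
  | C a => simpa using differentiable_const a
  | add q r hq hr => simp only [map_add]; exact hq.add hr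
  | mul_X q i hq =>
    simp only [MvPolynomial.eval_mul, MvPolynomial.eval_X]
    fin_cases i
    · simp; exact hq.mul differentiable_fst
    · simp; exact hq.mul differentiable_snd

theorem stmt_14 (n m : ℕ) (hn : 2 ≤ n) (hm : 1 ≤ m) (hpar : Even (m + n))
    (R : ℝ → ℝ → ℝ)
    (hRpoly : ∃ p : MvPolynomial (Fin 2) ℝ, ∀ x y : ℝ, R x y = MvPolynomial.eval ![x, y] p)
    (hRqh : ∀ l x y : ℝ, R (l * x) (l ^ n * y) = l ^ (m + n - 2) * R x y) :
    ∀ x y : ℝ, (x, y) ≠ ((0 : ℝ), (0 : ℝ)) →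
      (y + x * R x y)
          * deriv (fun x' => (x' ^ (2 * n) + n * y ^ 2) ^ (((m : ℝ) - 1) / (2 * n) + 1)) x
        + (-x ^ (2 * n - 1) + n * y * R x y)
          * deriv (fun y' => (x ^ (2 * n) + n * y' ^ 2) ^ (((m : ℝ) - 1) / (2 * n) + 1)) y
      = (deriv (fun x' => y + x' * R x' y) x
          + deriv (fun y' => -x ^ (2 * n - 1) + n * y' * R x y') y)
        * (x ^ (2 * n) + n * y ^ 2) ^ (((m : ℝ) - 1) / (2 * n) + 1) := by
  obtain ⟨p, hp⟩ := hRpoly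
  set G : ℝ × ℝ → ℝ := fun v => MvPolynomial.eval ![v.1, v.2] p with hGdef
  have hF : Differentiable ℝ G := mvpoly2_differentiable p
  have hG : ∀ a b : ℝ, R a b = G (a, b) := fun a b => hp a b
  intro x y hxy
  have hx0 : x ≠ 0 ∨ y ≠ 0 := by
    by_contra h
    push_neg at h
    exact hxy (by simp [h.1, h.2])
  set u : ℝ := x ^ (2 * n) + n * y ^ 2 with hu_def
  have hu : 0 < u := by
    rcases hx0 with h | h
    · have h1 : (0:ℝ) < x ^ (2 * n) := Even.pow_pos (even_two_mul n) h
      have h2 : (0:ℝ) ≤ n * y ^ 2 := by positivity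
      linarith
    · have h1 : (0:ℝ) ≤ x ^ (2 * n) := (even_two_mul n).pow_nonneg x
      have h2 : (0:ℝ) < n * y ^ 2 := by
        have hnr : (0:ℝ) < n := by exact_mod_cast (by omega : 0 < n)
        positivity
      linarith
  set α : ℝ := ((m : ℝ) - 1) / (2 * n) + 1 with hα_def
  have hn0 : (0:ℝ) < 2 * n := by
    have hnr : (0:ℝ) < n := by exact_mod_cast (by omega : 0 < n)
    linarith
  have hα1 : 1 ≤ α := by
    have h1 : (0:ℝ) ≤ ((m:ℝ) - 1) / (2 * n) := by
      apply div_nonneg _ hn0.le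
      have : (1:ℝ) ≤ m := by exact_mod_cast hm
      linarith
    rw [hα_def]; linarith
  set L := fderiv ℝ G (x, y) with hL
  have hLG : HasFDerivAt G L (x, y) := (hF (x, y)).hasFDerivAt
  set Rx : ℝ := L (1, 0) with hRx
  set Ry : ℝ := L (0, 1) with hRy
  have hdx : HasDerivAt (fun x' => R x' y) Rx x := by
    have h1 : HasDerivAt (fun x' : ℝ => (x', y)) ((1:ℝ), (0:ℝ)) x :=
      (hasDerivAt_id x).prodMk (hasDerivAt_const x y)
    have := hLG.comp_hasDerivAt x h1
    simpa [hG, Function.comp_def] using this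
  have hdy : HasDerivAt (fun y' => R x y') Ry y := by
    have h1 : HasDerivAt (fun y' : ℝ => (x, y')) ((0:ℝ), (1:ℝ)) y :=
      (hasDerivAt_const y x).prodMk (hasDerivAt_id y)
    have := hLG.comp_hasDerivAt y h1
    simpa [hG, Function.comp_def] using this
  -- Euler relation
  have heuler : x * Rx + n * y * Ry = ((m:ℝ) + n - 2) * R x y := by
    have hγ : HasDerivAt (fun l : ℝ => (l * x, l ^ n * y)) ((x, (n:ℝ) * y)) 1 := by
      have h1 : HasDerivAt (fun l : ℝ => l * x) x 1 := by
        simpa using (hasDerivAt_id (1:ℝ)).mul_const x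
      have h2 : HasDerivAt (fun l : ℝ => l ^ n * y) ((n:ℝ) * y) 1 := by
        simpa using (hasDerivAt_pow n (1:ℝ)).mul_const y
      exact h1.prodMk h2
    have hLG' : HasFDerivAt G L ((1:ℝ) * x, (1:ℝ) ^ n * y) := by simpa using hLG
    have hc1 : HasDerivAt (fun l : ℝ => G (l * x, l ^ n * y)) (L (x, (n:ℝ) * y)) 1 :=
      by have h := hLG'.comp_hasDerivAt (1:ℝ) hγ; exact h
    have hc2 : HasDerivAt (fun l : ℝ => l ^ (m + n - 2) * R x y)
        (((m + n - 2 : ℕ) : ℝ) * R x y) 1 := by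
      simpa using (hasDerivAt_pow (m + n - 2) (1:ℝ)).mul_const (R x y)
    have hfe : (fun l : ℝ => G (l * x, l ^ n * y)) = fun l : ℝ => l ^ (m + n - 2) * R x y := by
      funext l
      rw [← hG, hRqh]
    rw [hfe] at hc1
    have huniq : L (x, (n:ℝ) * y) = ((m + n - 2 : ℕ) : ℝ) * R x y := hc1.unique hc2
    have hdec : ((x : ℝ), (n:ℝ) * y) = x • ((1:ℝ), (0:ℝ)) + ((n:ℝ) * y) • ((0:ℝ), (1:ℝ)) := by
      simp [Prod.ext_iff]
    rw [hdec, map_add, map_smul, map_smul, smul_eq_mul, smul_eq_mul] at huniq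
    have hcast : ((m + n - 2 : ℕ) : ℝ) = (m:ℝ) + n - 2 := by
      have h2 : 2 ≤ m + n := by omega
      push_cast [Nat.cast_sub h2]
      ring
    rw [hcast, ← hRx, ← hRy] at huniq
    linarith [huniq]
  -- derivatives of V₀
  have hdX : HasDerivAt (fun x' => (x' ^ (2 * n) + n * y ^ 2) ^ α)
      ((2 * n * x ^ (2 * n - 1)) * α * u ^ (α - 1)) x := by
    have hinner : HasDerivAt (fun x' : ℝ => x' ^ (2 * n) + n * y ^ 2)
        (2 * n * x ^ (2 * n - 1)) x := by
      have := (hasDerivAt_pow (2 * n) x).add_const ((n:ℝ) * y ^ 2)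
      convert this using 1 <;> try rfl
      push_cast
      ring
    exact hinner.rpow_const (Or.inr hα1)
  have hdY : HasDerivAt (fun y' => (x ^ (2 * n) + n * y' ^ 2) ^ α)
      ((2 * n * y) * α * u ^ (α - 1)) y := by
    have hinner : HasDerivAt (fun y' : ℝ => x ^ (2 * n) + n * y' ^ 2)
        (2 * n * y) y := by
      have := ((hasDerivAt_pow 2 y).const_mul (n:ℝ)).const_add (x ^ (2 * n))
      convert this using 1 <;> try rfl
      push_cast
      ring
    exact hinner.rpow_const (Or.inr hα1)
  have hdP : HasDerivAt (fun x' => y + x' * R x' y) (R x y + x * Rx) x := by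
    have := ((hasDerivAt_id x).mul hdx).const_add y
    simpa using this
  have hdQ : HasDerivAt (fun y' => -x ^ (2 * n - 1) + (n:ℝ) * y' * R x y')
      ((n:ℝ) * R x y + (n:ℝ) * y * Ry) y := by
    have := (((hasDerivAt_id y).const_mul (n:ℝ)).mul hdy).const_add (-x ^ (2 * n - 1))
    convert this using 1 <;> try rfl
    simp [id_eq]
  rw [hdX.deriv, hdY.deriv, hdP.deriv, hdQ.deriv]
  -- algebra
  have hAB : u ^ (α - 1) * u = u ^ α := by
    rw [← Real.rpow_add_one hu.ne' (α - 1)]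
    ring_nf
  have hXx : x ^ (2 * n - 1) * x = x ^ (2 * n) := by
    rw [← pow_succ]
    congr 1
    omega
  have h2nα : 2 * (n:ℝ) * α = (m:ℝ) + 2 * n - 1 := by
    rw [hα_def]
    field_simp
    ring
  set A : ℝ := u ^ (α - 1) with hA
  set B : ℝ := u ^ α with hB
  have hu_expand : u = x ^ (2 * n - 1) * x + n * y ^ 2 := by rw [hXx]
  rw [hu_expand] at hAB
  set X : ℝ := x ^ (2 * n - 1) with hX
  linear_combination (2 * (n:ℝ) * α * R x y) * hAB - B * heuler + (B * R x y) * h2nα
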